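/- Let (X, A) be a deformation retract pair and consider a pushout square in topological spaces: A → U, A ↪ X, with pushout X ⊔_A U =: Ũ. If A ↪ X is a closed embedding and (X, A) is a deformation retract, then (Ũ, U) is a deformation retract pair; in particular the canonical map U → Ũ is a homotopy equivalence. -/

import Mathlib

open CategoryTheory Limits Topology
open scoped unitInterval

section Aux

variable {A X U : TopCat} (i : A ⟶ X) (g : A ⟶ U)

/-- The gluing relation for the pushout `X ⊔_A U`. -/
def pushRel : (↥X ⊕ ↥U) → (↥X ⊕ ↥U) → Prop := fun p q =>
  ∃ a : A, p = Sum.inl (i a) ∧ q = Sum.inr (g a)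

/-- Explicit quotient model for the pushout. -/
def PushModel : TopCat := TopCat.of (Quot (pushRel i g))

/-- Left leg of the model cocone. -/
def modelInl : X ⟶ PushModel i g :=
  TopCat.ofHom ⟨fun x => Quot.mk _ (Sum.inl x), (isQuotientMap_quot_mk.continuous).comp continuous_inl⟩

/-- Right leg of the model cocone. -/
def modelInr : U ⟶ PushModel i g :=
  TopCat.ofHom ⟨fun u => Quot.mk _ (Sum.inr u), (isQuotientMap_quot_mk.continuous).comp continuous_inr⟩

lemma model_condition : i ≫ modelInl i g = g ≫ modelInr i g := by
  ext a
  show (Quot.mk (pushRel i g) (Sum.inl (i a)) : Quot (pushRel i g)) = Quot.mk _ (Sum.inr (g a))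
  exact Quot.sound ⟨a, rfl, rfl⟩

/-- The model cocone. -/
def modelCocone : PushoutCocone i g :=
  PushoutCocone.mk (modelInl i g) (modelInr i g) (model_condition i g)

/-- The model cocone is a colimit. -/
def modelIsColimit : IsColimit (modelCocone i g) := by
  refine PushoutCocone.IsColimit.mk (model_condition i g)
    (fun s => TopCat.ofHom ⟨Quot.lift (Sum.elim s.inl s.inr) ?_, ?_⟩) (fun s => ?_) (fun s => ?_)
    (fun s m h1 h2 => ?_)
  · rintro p q ⟨a, rfl, rfl⟩
    show s.inl (i a) = s.inr (g a)
    exact congrFun (congrArg (fun (f : A ⟶ s.pt) => (f : ↥A → ↥(s.pt))) s.condition) a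
  · exact continuous_quot_lift _ ((s.inl.hom.continuous.sumElim s.inr.hom.continuous))
  · ext x; rfl
  · ext u; rfl
  · ext y
    obtain ⟨p, rfl⟩ := Quot.exists_rep y
    rcases p with x | u
    · show m (Quot.mk _ (Sum.inl x)) = s.inl x
      exact congrFun (congrArg (fun (f : X ⟶ s.pt) => (f : ↥X → ↥(s.pt))) h1) x
    · show m (Quot.mk _ (Sum.inr u)) = s.inr u
      exact congrFun (congrArg (fun (f : U ⟶ s.pt) => (f : ↥U → ↥(s.pt))) h2) u

end Aux

/-- Let `(X, A)` be a deformation retract pair, with `i : A → X` a closed embedding,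
witnessed by a homotopy `H` from the identity of `X` to a retraction onto `A` fixing
`A` pointwise. For any attaching map `g : A → U`, the pushout `Ũ = X ⊔_A U` deformation
retracts onto (the image of) `U`; in particular the canonical map `U → Ũ` is a
homotopy equivalence. -/
theorem pushout_deformation_retract (A X U : TopCat) (i : A ⟶ X) (g : A ⟶ U)
    (hi : IsClosedEmbedding i)
    (H : C(↥X × I, ↥X))
    (H0 : ∀ x : X, H (x, 0) = x)
    (H1 : ∀ x : X, H (x, 1) ∈ Set.range i)
    (Hfix : ∀ (a : A) (t : I), H (i a, t) = i a) :
    (∃ H' : C(↥(pushout i g) × I, ↥(pushout i g)),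
      (∀ y : ↥(pushout i g), H' (y, 0) = y) ∧
      (∀ y : ↥(pushout i g), H' (y, 1) ∈ Set.range (pushout.inr i g)) ∧
      (∀ (u : U) (t : I), H' (pushout.inr i g u, t) = pushout.inr i g u)) ∧
    Nonempty (ContinuousMap.HomotopyEquiv ↥U ↥(pushout i g)) := by
  classical
  -- the comparison isomorphism with the explicit model
  let e : pushout i g ≅ PushModel i g :=
    colimit.isoColimitCocone ⟨modelCocone i g, modelIsColimit i g⟩
  have he_inl : ∀ x : X, e.hom (pushout.inl i g x) = Quot.mk _ (Sum.inl x) := by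
    intro x
    exact congrFun (congrArg (fun (f : X ⟶ PushModel i g) => (f : ↥X → ↥(PushModel i g)))
      (colimit.isoColimitCocone_ι_hom ⟨modelCocone i g, modelIsColimit i g⟩ WalkingSpan.left)) x
  have he_inr : ∀ u : U, e.hom (pushout.inr i g u) = Quot.mk _ (Sum.inr u) := by
    intro u
    exact congrFun (congrArg (fun (f : U ⟶ PushModel i g) => (f : ↥U → ↥(PushModel i g)))
      (colimit.isoColimitCocone_ι_hom ⟨modelCocone i g, modelIsColimit i g⟩ WalkingSpan.right)) u
  -- the canonical map from the sum is a quotient map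
  let φ : (↥X ⊕ ↥U) → ↥(pushout i g) := Sum.elim (pushout.inl i g) (pushout.inr i g)
  have hφ : IsQuotientMap φ := by
    have heq : φ = (TopCat.homeoOfIso e).symm ∘ (Quot.mk (pushRel i g)) := by
      funext p
      rcases p with x | u
      · simp only [φ, Sum.elim_inl, Function.comp_apply]
        apply (TopCat.homeoOfIso e).injective
        exact (he_inl x).trans ((TopCat.homeoOfIso e).apply_symm_apply _).symm
      · simp only [φ, Sum.elim_inr, Function.comp_apply]
        apply (TopCat.homeoOfIso e).injective
        exact (he_inr u).trans ((TopCat.homeoOfIso e).apply_symm_apply _).symm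
    rw [heq]
    exact (TopCat.homeoOfIso e).symm.isQuotientMap.comp isQuotientMap_quot_mk
  -- pointwise pushout condition
  have hcond : ∀ a : A, pushout.inl i g (i a) = pushout.inr i g (g a) := by
    intro a
    exact congrFun (congrArg (fun (f : A ⟶ pushout i g) => (f : ↥A → ↥(pushout i g)))
      (pushout.condition (f := i) (g := g))) a
  -- the retraction X → A
  have hr0' : ∀ x : X, ∃ a : A, i a = H (x, 1) := fun x => H1 x
  let r0 : ↥X → ↥A := fun x => (hr0' x).choose
  have hr0 : ∀ x : X, i (r0 x) = H (x, 1) := fun x => (hr0' x).choose_spec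
  have hr0cont : Continuous r0 := by
    rw [hi.toIsEmbedding.continuous_iff]
    have : (⇑i ∘ r0) = fun x => H (x, 1) := funext fun x => hr0 x
    rw [this]
    exact H.continuous.comp (continuous_id.prodMk continuous_const)
  have hr0a : ∀ a : A, r0 (i a) = a := by
    intro a
    apply hi.injective
    rw [hr0, Hfix]
  -- the time-t maps on the pushout, via desc
  have hhtcond : ∀ t : I, i ≫ (TopCat.ofHom ⟨fun x => pushout.inl i g (H (x, t)),
      (pushout.inl i g).hom.continuous.comp
        (H.continuous.comp (continuous_id.prodMk continuous_const))⟩ : X ⟶ pushout i g)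
      = g ≫ pushout.inr i g := by
    intro t
    ext a
    show pushout.inl i g (H (i a, t)) = pushout.inr i g (g a)
    rw [Hfix a t, hcond a]
  let ht : I → (pushout i g ⟶ pushout i g) := fun t =>
    pushout.desc _ (pushout.inr i g) (hhtcond t)
  have hht_inl : ∀ (t : I) (x : X), ht t (pushout.inl i g x) = pushout.inl i g (H (x, t)) := by
    intro t x
    exact congrFun (congrArg (fun (f : X ⟶ pushout i g) => (f : ↥X → ↥(pushout i g)))
      (pushout.inl_desc _ _ (hhtcond t))) x
  have hht_inr : ∀ (t : I) (u : U), ht t (pushout.inr i g u) = pushout.inr i g u := by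
    intro t u
    exact congrFun (congrArg (fun (f : U ⟶ pushout i g) => (f : ↥U → ↥(pushout i g)))
      (pushout.inr_desc _ _ (hhtcond t))) u
  -- the full homotopy, continuous by the quotient-map trick
  have hFcont : Continuous (fun p : ↥(pushout i g) × I => ht p.2 p.1) := by
    apply hφ.continuous_lift_prod_left
    have key : (fun p : (↥X ⊕ ↥U) × I => ht p.2 (φ p.1)) =
        (Sum.elim (fun q : ↥X × I => pushout.inl i g (H q))
          (fun q : ↥U × I => pushout.inr i g q.1)) ∘ (Homeomorph.sumProdDistrib) := by
      funext p
      rcases p with ⟨x | u, t⟩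
      · exact hht_inl t x
      · exact hht_inr t u
    rw [key]
    exact (((pushout.inl i g).hom.continuous.comp H.continuous).sumElim
      ((pushout.inr i g).hom.continuous.comp continuous_fst)).comp
      (Homeomorph.sumProdDistrib).continuous
  let H' : C(↥(pushout i g) × I, ↥(pushout i g)) := ⟨fun p => ht p.2 p.1, hFcont⟩
  have hsurj : ∀ y : ↥(pushout i g), (∃ x : X, y = pushout.inl i g x) ∨
      (∃ u : U, y = pushout.inr i g u) := by
    intro y
    obtain ⟨p, rfl⟩ := hφ.surjective y
    rcases p with x | u
    · exact Or.inl ⟨x, rfl⟩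
    · exact Or.inr ⟨u, rfl⟩
  have h'0 : ∀ y : ↥(pushout i g), H' (y, 0) = y := by
    intro y
    rcases hsurj y with ⟨x, rfl⟩ | ⟨u, rfl⟩
    · show ht 0 _ = _
      rw [hht_inl, H0]
    · exact hht_inr 0 u
  -- t = 1 lands in U and equals inr ∘ r
  have h'1' : ∀ x : X, H' (pushout.inl i g x, 1) = pushout.inr i g (g (r0 x)) := by
    intro x
    show ht 1 _ = _
    rw [hht_inl, ← hr0 x, hcond]
  -- the retraction pushout → U
  have hρcond : i ≫ (TopCat.ofHom ⟨fun x => g (r0 x), g.hom.continuous.comp hr0cont⟩ : X ⟶ U) = g ≫ 𝟙 U := by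
    ext a
    show g (r0 (i a)) = g a
    rw [hr0a]
  let r : pushout i g ⟶ U := pushout.desc _ (𝟙 U) hρcond
  have hr_inl : ∀ x : X, r (pushout.inl i g x) = g (r0 x) := by
    intro x
    exact congrFun (congrArg (fun (f : X ⟶ U) => (f : ↥X → ↥U))
      (pushout.inl_desc _ _ hρcond)) x
  have hr_inr : ∀ u : U, r (pushout.inr i g u) = u := by
    intro u
    exact congrFun (congrArg (fun (f : U ⟶ U) => (f : ↥U → ↥U))
      (pushout.inr_desc _ _ hρcond)) u
  constructor
  · refine ⟨H', h'0, ?_, fun u t => hht_inr t u⟩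
    intro y
    rcases hsurj y with ⟨x, rfl⟩ | ⟨u, rfl⟩
    · exact ⟨g (r0 x), (h'1' x).symm⟩
    · exact ⟨u, (hht_inr 1 u).symm⟩
  · -- homotopy equivalence
    refine ⟨⟨((pushout.inr i g).hom : C(↥U, ↥(pushout i g))), (r.hom : C(↥(pushout i g), ↥U)), ?_, ?_⟩⟩
    · -- r ∘ inr ≃ id
      have : (r.hom : C(↥(pushout i g), ↥U)).comp ((pushout.inr i g).hom : C(↥U, ↥(pushout i g)))
          = ContinuousMap.id ↥U := by
        ext u
        exact hr_inr u
      rw [this]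
    · -- inr ∘ r ≃ id
      refine ⟨(ContinuousMap.Homotopy.symm ?_ : ContinuousMap.Homotopy _ _)⟩
      refine ⟨⟨fun p => H' (p.2, p.1),
        H'.continuous.comp (continuous_snd.prodMk continuous_fst)⟩, h'0, ?_⟩
      intro y
      rcases hsurj y with ⟨x, rfl⟩ | ⟨u, rfl⟩
      · show H' (_, 1) = pushout.inr i g (r (pushout.inl i g x))
        rw [h'1' x, hr_inl]
      · show H' (_, 1) = pushout.inr i g (r (pushout.inr i g u))
        rw [hr_inr]
        exact hht_inr 1 u
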